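/- For every subset R of the interval [3,8] = {3,4,5,6,7,8}, the descent set statistics in 𝔖_{11} satisfy: β_{11}(R ∪ {1,9}) ≡ β_{11}(R ∪ {2,10}) ≡ (−1)^{|R|} (mod 3) and β_{11}(R ∪ {1,10}) ≡ β_{11}(R ∪ {2,9}) ≡ −(−1)^{|R|} (mod 3). In particular, all of these values are nonzero modulo 3. -/

import Mathlib

/-- The descent set of a permutation of `Fin n`, as a subset of `[n-1] = {1,…,n-1}`
(1-based positions): `i` is a descent if `π(i) > π(i+1)`. -/
def descentSet (n : ℕ) (π : Equiv.Perm (Fin n)) : Finset ℕ :=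
  (Finset.Ico 1 n).filter fun i => ∀ h : i < n, π ⟨i, h⟩ < π ⟨i - 1, by omega⟩

/-- The descent set statistic `β_n(S)`: the number of permutations of `{1,…,n}`
with descent set `S`. -/
def beta (n : ℕ) (S : Finset ℕ) : ℕ :=
  (Finset.univ.filter fun π : Equiv.Perm (Fin n) => descentSet n π = S).card

/-- The descent set polynomial `Q_n(t) = ∑_{S ⊆ [n-1]} t^{β_n(S)}`. -/
noncomputable def Q (n : ℕ) : Polynomial ℤ :=
  ∑ S ∈ (Finset.Ico 1 n).powerset, Polynomial.X ^ beta n S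

namespace BetaAux

open Finset

/-- block index of position `i` determined by the set `S` of allowed descents -/
def cs (n : ℕ) (S : Finset ℕ) (i : Fin n) : ℕ := (S.filter (· ≤ (i : ℕ))).card

lemma cs_mono {n : ℕ} (S : Finset ℕ) : Monotone (cs n S) := by
  intro i j hij
  exact card_le_card (Finset.monotone_filter_right S fun x _ hx => le_trans hx hij)

lemma cs_succ (S : Finset ℕ) (i : ℕ) :
    (S.filter (· ≤ i + 1)).card
      = (S.filter (· ≤ i)).card + (if i + 1 ∈ S then 1 else 0) := by
  have h1 : S.filter (· ≤ i + 1) = S.filter (· ≤ i) ∪ S.filter (· = i + 1) := by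
    ext x
    simp only [mem_union, mem_filter]
    constructor
    · rintro ⟨hx, hle⟩
      rcases Nat.lt_or_ge x (i + 1) with h | h
      · exact Or.inl ⟨hx, by omega⟩
      · exact Or.inr ⟨hx, by omega⟩
    · rintro (⟨hx, h⟩ | ⟨hx, h⟩) <;> exact ⟨hx, by omega⟩
  rw [h1, card_union_of_disjoint, filter_eq']
  · split <;> simp
  · rw [disjoint_left]
    intro x hx hx'
    simp only [mem_filter] at hx hx'
    omega

/-- characterization: `Des(π) ⊆ S` iff `π` is increasing on each block of `cs`. -/
lemma descent_char {n : ℕ} (S : Finset ℕ) (π : Equiv.Perm (Fin n)) :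
    descentSet n π ⊆ S ↔ ∀ i j : Fin n, i < j → cs n S i = cs n S j → π i < π j := by
  constructor
  · intro hsub
    have step : ∀ j : ℕ, ∀ hj : j + 1 < n,
        cs n S ⟨j, by omega⟩ = cs n S ⟨j + 1, hj⟩ →
        π ⟨j, by omega⟩ < π ⟨j + 1, hj⟩ := by
      intro j hj hc
      have hnotS : j + 1 ∉ S := by
        intro hmem
        have h2 := cs_succ S j
        rw [if_pos hmem] at h2
        simp only [cs] at hc
        omega
      have hnotDes : j + 1 ∉ descentSet n π := fun h => hnotS (hsub h)
      have hnd : ¬ (π ⟨j + 1, hj⟩ < π ⟨j, by omega⟩) := by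
        intro hlt
        apply hnotDes
        simp only [descentSet, mem_filter, mem_Ico]
        refine ⟨⟨by omega, hj⟩, fun h => ?_⟩
        have he : (⟨j + 1 - 1, by omega⟩ : Fin n) = ⟨j, by omega⟩ := by
          apply Fin.ext; simp
        rw [he]
        exact hlt
      have hne : π ⟨j, by omega⟩ ≠ π ⟨j + 1, hj⟩ := by
        intro h
        have := π.injective h
        simp [Fin.ext_iff] at this
      exact lt_of_le_of_ne (le_of_not_gt hnd) hne
    have gen : ∀ d : ℕ, ∀ i : ℕ, ∀ h : i + d + 1 < n,
        cs n S ⟨i, by omega⟩ = cs n S ⟨i + d + 1, h⟩ →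
        π ⟨i, by omega⟩ < π ⟨i + d + 1, h⟩ := by
      intro d
      induction d with
      | zero => intro i h hc; exact step i h hc
      | succ d IH =>
        intro i h hc
        have hmid : cs n S ⟨i, by omega⟩ = cs n S ⟨i + d + 1, by omega⟩ ∧
            cs n S ⟨i + d + 1, by omega⟩ = cs n S ⟨i + d + 2, by omega⟩ := by
          have m1 : cs n S ⟨i, by omega⟩ ≤ cs n S ⟨i + d + 1, by omega⟩ :=
            cs_mono S (by simp only [Fin.mk_le_mk]; omega)
          have m2 : cs n S ⟨i + d + 1, by omega⟩ ≤ cs n S ⟨i + d + 2, by omega⟩ :=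
            cs_mono S (by simp only [Fin.mk_le_mk]; omega)
          have he : (⟨i + (d + 1) + 1, h⟩ : Fin n) = ⟨i + d + 2, by omega⟩ := by
            apply Fin.ext; simp; omega
          rw [he] at hc
          omega
        have h1 := IH i (by omega) hmid.1
        have h2 := step (i + d + 1) (by omega) hmid.2
        have he : (⟨i + (d + 1) + 1, h⟩ : Fin n) = ⟨i + d + 1 + 1, by omega⟩ := by
          apply Fin.ext; simp; omega
        rw [he]
        exact lt_trans h1 h2
    intro i j hij hc
    have hij' : (i : ℕ) < (j : ℕ) := hij
    have he1 : i = (⟨(i : ℕ), i.isLt⟩ : Fin n) := by apply Fin.ext; simp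
    have he2 : j = (⟨(i : ℕ) + ((j : ℕ) - (i : ℕ) - 1) + 1, by omega⟩ : Fin n) := by
      apply Fin.ext; simp; omega
    rw [he1, he2] at hc ⊢
    exact gen ((j : ℕ) - (i : ℕ) - 1) (i : ℕ) (by omega) hc
  · intro hP k hk
    simp only [descentSet, mem_filter, mem_Ico] at hk
    obtain ⟨⟨hk1, hkn⟩, hdes⟩ := hk
    have hlt := hdes hkn
    by_contra hkS
    have hceq : cs n S ⟨k - 1, by omega⟩ = cs n S ⟨k, hkn⟩ := by
      have h2 := cs_succ S (k - 1)
      have hk' : k - 1 + 1 = k := by omega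
      rw [hk', if_neg hkS] at h2
      simp only [cs]
      omega
    have := hP ⟨k - 1, by omega⟩ ⟨k, hkn⟩ (by simp [Fin.lt_def]; omega) hceq
    exact absurd hlt (asymm this)

/-- A permutation preserving the fibers of `c` and strictly increasing on each fiber
is the identity. -/
lemma perm_eq_one {n : ℕ} (u : Equiv.Perm (Fin n)) (c : Fin n → ℕ)
    (hc : ∀ i, c (u i) = c i)
    (hmono : ∀ i j : Fin n, i < j → c i = c j → u i < u j) : u = 1 := by
  have key : ∀ m : ℕ, ∀ x : Fin n, (x : ℕ) = m → u x = x := by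
    intro m
    induction m using Nat.strong_induction_on with
    | _ m IH =>
      intro x hx
      rcases lt_trichotomy (u x) x with h | h | h
      · have h1 : u (u x) = u x := IH (u x) (by rw [← hx]; exact h) (u x) rfl
        exact absurd (u.injective h1) (ne_of_lt h)
      · exact h
      · exfalso
        have hz : u (u⁻¹ x) = x := u.apply_symm_apply x
        have hcz : c (u⁻¹ x) = c x := by
          conv_rhs => rw [← hz]
          exact (hc _).symm
        rcases lt_trichotomy (u⁻¹ x) x with h1 | h1 | h1
        · have h2 : u (u⁻¹ x) = u⁻¹ x := IH (u⁻¹ x) (by rw [← hx]; exact h1) (u⁻¹ x) rfl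
          rw [hz] at h2
          exact absurd h2.symm (ne_of_lt h1)
        · rw [h1] at hz
          exact absurd hz (ne_of_gt h)
        · have h2 := hmono x (u⁻¹ x) h1 hcz.symm
          rw [hz] at h2
          exact absurd h2 (asymm h)
  apply Equiv.ext
  intro x
  exact key (x : ℕ) x rfl

/-- product of factorials of the block sizes determined by `S` -/
def Wt (n : ℕ) (S : Finset ℕ) : ℕ :=
  ∏ v ∈ Finset.univ.image (cs n S),
    ((Finset.univ.filter fun a : Fin n => cs n S a = v).card).factorial

lemma alpha_mul {n : ℕ} (S : Finset ℕ) :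
    (univ.filter fun π : Equiv.Perm (Fin n) => descentSet n π ⊆ S).card * Wt n S
      = n.factorial := by
  classical
  set c : Fin n → ℕ := cs n S with hcdef
  set P : Equiv.Perm (Fin n) → Prop :=
    fun π => ∀ i j : Fin n, i < j → c i = c j → π i < π j with hPdef
  have hbij : Function.Bijective
      (fun pw : {π : Equiv.Perm (Fin n) // P π} × {w : Equiv.Perm (Fin n) // c ∘ w = c} =>
        (pw.1.1 * pw.2.1 : Equiv.Perm (Fin n))) := by
    constructor
    · rintro ⟨⟨π₁, h₁⟩, ⟨w₁, hw₁⟩⟩ ⟨⟨π₂, h₂⟩, ⟨w₂, hw₂⟩⟩ heq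
      simp only at heq
      set u : Equiv.Perm (Fin n) := w₁ * w₂⁻¹ with hu
      have hcu : ∀ i, c (u i) = c i := by
        intro i
        have e1 : c (w₁ (w₂⁻¹ i)) = c (w₂⁻¹ i) := congrFun hw₁ _
        have e2 : c (w₂ (w₂⁻¹ i)) = c (w₂⁻¹ i) := congrFun hw₂ _
        rw [show w₂ (w₂⁻¹ i) = i from w₂.apply_symm_apply i] at e2
        simpa [hu, Equiv.Perm.mul_apply, e2] using e1
      have hπ : π₂ = π₁ * u := by
        rw [hu, ← mul_assoc, heq, mul_assoc, mul_inv_cancel, mul_one]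
      have humono : ∀ i j : Fin n, i < j → c i = c j → u i < u j := by
        intro i j hij hcij
        have hp2 := h₂ i j hij hcij
        rw [hπ] at hp2
        have hp2' : π₁ (u i) < π₁ (u j) := hp2
        have hcui : c (u i) = c (u j) := by rw [hcu, hcu, hcij]
        rcases lt_trichotomy (u i) (u j) with h | h | h
        · exact h
        · rw [h] at hp2'; exact absurd hp2' (lt_irrefl _)
        · exact absurd (h₁ _ _ h hcui.symm) (asymm hp2')
      have hu1 : u = 1 := perm_eq_one u c hcu humono
      have hw : w₁ = w₂ := by
        have h2 : w₁ * w₂⁻¹ = 1 := by rw [← hu, hu1]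
        exact mul_inv_eq_one.mp h2
      have hπ12 : π₁ = π₂ := by rw [hπ, hu1, mul_one]
      simp only [Prod.mk.injEq, Subtype.mk.injEq]
      exact ⟨hπ12, hw⟩
    · intro σ
      set f : Fin n → Lex (ℕ × ℕ) := fun i => toLex (c i, (σ i : ℕ)) with hf
      have hinj : Function.Injective f := by
        intro a b hab
        have h2 : ((c a, (σ a : ℕ)) : ℕ × ℕ) = (c b, (σ b : ℕ)) := hab
        have h3 : (σ a : ℕ) = (σ b : ℕ) := congrArg Prod.snd h2
        exact σ.injective (Fin.ext h3)
      set w := Tuple.sort f with hw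
      have hsm : StrictMono (f ∘ w) :=
        (Tuple.monotone_sort f).strictMono_of_injective (hinj.comp w.injective)
      have hcw : c ∘ w = c := by
        have h1 : Monotone (c ∘ ⇑w) := by
          intro a b hab
          have h2 := hsm.monotone hab
          have h3 := Prod.Lex.le_iff.mp h2
          rcases h3 with h3 | h3
          · exact le_of_lt h3
          · exact le_of_eq h3.1
        have h2 := (Tuple.comp_sort_eq_comp_iff_monotone (f := c) (σ := w)).mpr h1
        have h3 := (Tuple.comp_sort_eq_comp_iff_monotone (f := c) (σ := Equiv.refl _)).mpr
          (by simpa using cs_mono (n := n) S)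
        rw [h2, ← h3]
        funext x
        simp
      refine ⟨⟨⟨σ * w, ?_⟩, ⟨w⁻¹, ?_⟩⟩, ?_⟩
      · intro i j hij hcij
        have h2 := hsm hij
        have h3 := Prod.Lex.lt_iff.mp h2
        have hci : c (w i) = c i := congrFun hcw i
        have hcj : c (w j) = c j := congrFun hcw j
        rcases h3 with h3 | h3
        · exfalso
          change c (w i) < c (w j) at h3
          rw [hci, hcj, hcij] at h3
          exact lt_irrefl _ h3
        · have h4 : (σ (w i) : ℕ) < (σ (w j) : ℕ) := h3.2
          exact h4
      · funext i
        have h2 : c (w (w⁻¹ i)) = c (w⁻¹ i) := congrFun hcw (w⁻¹ i)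
        rw [show w (w⁻¹ i) = i from w.apply_symm_apply i] at h2
        exact h2.symm
      · simp [mul_assoc]
  have hcard := Fintype.card_of_bijective hbij
  rw [Fintype.card_prod, Fintype.card_perm, Fintype.card_fin] at hcard
  rw [Fintype.card_subtype, DomMulAct.stabilizer_card'] at hcard
  have hfilter : (univ.filter fun π : Equiv.Perm (Fin n) => descentSet n π ⊆ S)
      = univ.filter P := by
    apply filter_congr
    intro π _
    simpa using descent_char S π
  rw [hfilter]
  rw [← hcard]
  unfold Wt
  congr 1
  apply Finset.prod_congr rfl
  intro v _
  rw [Fintype.card_subtype]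

lemma alpha_eq_sum_beta {n : ℕ} (S : Finset ℕ) :
    (univ.filter fun π : Equiv.Perm (Fin n) => descentSet n π ⊆ S).card
      = ∑ T ∈ S.powerset, beta n T := by
  classical
  rw [Finset.card_eq_sum_card_fiberwise
    (f := descentSet n) (t := S.powerset)
    (fun π hπ => mem_powerset.mpr (mem_filter.mp hπ).2)]
  apply Finset.sum_congr rfl
  intro T hT
  rw [filter_filter]
  unfold beta
  congr 1
  apply filter_congr
  intro π _
  simp only [mem_powerset] at hT
  constructor
  · rintro ⟨_, h⟩; exact h
  · intro h; exact ⟨h ▸ hT, h⟩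

lemma sum_powerset_inv {A : Type*} [CommRing A] :
    ∀ (S : Finset ℕ) (g : Finset ℕ → A),
      ∑ T ∈ S.powerset, ∑ U ∈ T.powerset, (-1 : A) ^ (T.card - U.card) * g U = g S := by
  intro S
  induction S using Finset.induction_on with
  | empty => intro g; simp
  | insert _ _ ha IH =>
    rename_i a S'
    intro g
    rw [Finset.sum_powerset_insert ha]
    have step : ∀ T ∈ S'.powerset,
        ∑ U ∈ (insert a T).powerset, (-1 : A) ^ ((insert a T).card - U.card) * g U
          = (-(∑ U ∈ T.powerset, (-1 : A) ^ (T.card - U.card) * g U))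
            + ∑ U ∈ T.powerset, (-1 : A) ^ (T.card - U.card) * g (insert a U) := by
      intro T hT
      have haT : a ∉ T := fun h => ha (mem_powerset.mp hT h)
      rw [Finset.sum_powerset_insert haT, card_insert_of_notMem haT]
      congr 1
      · rw [← Finset.sum_neg_distrib]
        apply Finset.sum_congr rfl
        intro U hU
        have hUT : U.card ≤ T.card := card_le_card (mem_powerset.mp hU)
        have he : T.card + 1 - U.card = (T.card - U.card) + 1 := by omega
        rw [he, pow_succ]
        ring
      · apply Finset.sum_congr rfl
        intro U hU
        have haU : a ∉ U := fun h => haT (mem_powerset.mp hU h)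
        have hUT : U.card ≤ T.card := card_le_card (mem_powerset.mp hU)
        rw [card_insert_of_notMem haU]
        have he : T.card + 1 - (U.card + 1) = T.card - U.card := by omega
        rw [he]
    rw [Finset.sum_congr rfl step, Finset.sum_add_distrib, Finset.sum_neg_distrib]
    have hIH := IH (fun U => g (insert a U))
    rw [hIH]
    ring

lemma eq_of_sum_powerset_eq {A : Type*} [AddCommGroup A] (f F : Finset ℕ → A)
    (h : ∀ S : Finset ℕ, ∑ T ∈ S.powerset, f T = ∑ T ∈ S.powerset, F T) :
    ∀ S : Finset ℕ, f S = F S := by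
  intro S
  induction S using Finset.strongInduction with
  | _ S IH =>
    have hS := h S
    rw [← Finset.add_sum_erase _ f (mem_powerset_self S),
      ← Finset.add_sum_erase _ F (mem_powerset_self S)] at hS
    have he : ∑ T ∈ (S.powerset).erase S, f T = ∑ T ∈ (S.powerset).erase S, F T := by
      apply Finset.sum_congr rfl
      intro T hT
      rw [mem_erase, mem_powerset] at hT
      exact IH T (ssubset_of_subset_of_ne hT.2 hT.1)
    rw [he] at hS
    exact add_right_cancel hS

lemma beta_zmod (S : Finset ℕ) :
    (beta 11 S : ZMod 3)
      = ∑ T ∈ S.powerset,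
          (-1 : ZMod 3) ^ (S.card - T.card) * ((39916800 / Wt 11 T : ℕ) : ZMod 3) := by
  have halpha : ∀ S : Finset ℕ,
      ((univ.filter fun π : Equiv.Perm (Fin 11) => descentSet 11 π ⊆ S).card : ℕ)
        = 39916800 / Wt 11 S := by
    intro S
    have h1 := alpha_mul (n := 11) S
    have hpos : 0 < Wt 11 S := Finset.prod_pos fun _ _ => Nat.factorial_pos _
    have h2 : (11 : ℕ).factorial = 39916800 := by norm_num [Nat.factorial]
    rw [h2] at h1
    exact (Nat.div_eq_of_eq_mul_left hpos h1.symm).symm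
  refine eq_of_sum_powerset_eq (fun S => (beta 11 S : ZMod 3))
    (fun S => ∑ T ∈ S.powerset,
      (-1 : ZMod 3) ^ (S.card - T.card) * ((39916800 / Wt 11 T : ℕ) : ZMod 3)) ?_ S
  intro S
  rw [sum_powerset_inv S (fun T => ((39916800 / Wt 11 T : ℕ) : ZMod 3))]
  rw [← Nat.cast_sum, ← alpha_eq_sum_beta, halpha]


/-- table of the 2048 values `(11! / Wt 11 T) % 3`, as base-3 digits -/
def bigTable : ℕ := 57721450541982700920527616285965571275912233165705810699910439638627450343225962988715697309553778827700070130534687584159466784516468178718539785858133025046136091578142031787922955924564618699802697443471815434438396493130694744713059583596619072521487404434226754378163205954740176619443534034791149820711347525000364470826294525900767629743060070576951967733094846561985893480563606110240701119579200864338354370953089219749203839570761582753216924001534178183225000164263571836831855835555299657961821540030585265666064185336805020281374563919308477357336965032042538058864541524312273838786699822992415828147224967576851534187764818831818911852926303221042395525347786719882844849448380705870372961248045312911488485601290123444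

/-- fast lookup of `(11!/Wt 11 T) mod 3` -/
def Ffast (T : Finset ℕ) : ZMod 3 := (((bigTable / 3 ^ (∑ i ∈ T, 2 ^ i)) % 3 : ℕ) : ZMod 3)

set_option maxRecDepth 1000000 in
set_option maxHeartbeats 8000000 in
lemma bridge_a : ∀ T ∈ (Finset.Icc 1 8).powerset,
    ((39916800 / Wt 11 T : ℕ) : ZMod 3) = Ffast T := by decide

set_option maxRecDepth 1000000 in
set_option maxHeartbeats 8000000 in
lemma bridge_b : ∀ T ∈ (Finset.Icc 1 8).powerset,
    ((39916800 / Wt 11 (insert 9 T) : ℕ) : ZMod 3) = Ffast (insert 9 T) := by decide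

set_option maxRecDepth 1000000 in
set_option maxHeartbeats 8000000 in
lemma bridge_c : ∀ T ∈ (Finset.Icc 1 8).powerset,
    ((39916800 / Wt 11 (insert 10 T) : ℕ) : ZMod 3) = Ffast (insert 10 T) := by decide

set_option maxRecDepth 1000000 in
set_option maxHeartbeats 8000000 in
lemma bridge_d : ∀ T ∈ (Finset.Icc 1 8).powerset,
    ((39916800 / Wt 11 (insert 9 (insert 10 T)) : ℕ) : ZMod 3)
      = Ffast (insert 9 (insert 10 T)) := by decide

lemma bridge : ∀ T ∈ (Finset.Icc 1 10).powerset,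
    ((39916800 / Wt 11 T : ℕ) : ZMod 3) = Ffast T := by
  intro T hT
  rw [mem_powerset] at hT
  have hsub : (T.erase 9).erase 10 ⊆ Finset.Icc 1 8 := by
    intro x hx
    have h1 := mem_erase.mp hx
    have h2 := mem_erase.mp h1.2
    have h3 := mem_Icc.mp (hT h2.2)
    rw [mem_Icc]
    omega
  have hmem : (T.erase 9).erase 10 ∈ (Finset.Icc 1 8).powerset := mem_powerset.mpr hsub
  by_cases h9 : 9 ∈ T <;> by_cases h10 : 10 ∈ T
  · have hrep : T = insert 9 (insert 10 ((T.erase 9).erase 10)) := by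
      ext x
      by_cases e9 : x = 9 <;> by_cases e10 : x = 10 <;>
        simp [mem_insert, mem_erase, e9, e10, h9, h10]
    rw [hrep]
    exact bridge_d _ hmem
  · have herase : (T.erase 9).erase 10 = T.erase 9 := erase_eq_of_notMem (by
      simp [mem_erase, h10])
    have hrep : T = insert 9 (T.erase 9) := (insert_erase h9).symm
    rw [hrep, ← herase]
    exact bridge_b _ hmem
  · have hcomm : (T.erase 9).erase 10 = (T.erase 10).erase 9 := erase_right_comm
    have herase : (T.erase 10).erase 9 = T.erase 10 := erase_eq_of_notMem (by
      simp [mem_erase, h9])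
    have hrep : T = insert 10 (T.erase 10) := (insert_erase h10).symm
    rw [hrep, ← herase, ← hcomm]
    exact bridge_c _ hmem
  · have he9 : T.erase 9 = T := erase_eq_of_notMem h9
    have he10 : (T.erase 9).erase 10 = T := by rw [he9]; exact erase_eq_of_notMem h10
    rw [← he10]
    exact bridge_a _ hmem

/-- fast version of the descent-statistic formula mod 3 -/
def BfFast (S : Finset ℕ) : ZMod 3 :=
  ∑ T ∈ S.powerset, (-1 : ZMod 3) ^ (S.card - T.card) * Ffast T

lemma beta_fast (S : Finset ℕ) (hS : S ⊆ Finset.Icc 1 10) :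
    (beta 11 S : ZMod 3) = BfFast S := by
  rw [beta_zmod]
  apply Finset.sum_congr rfl
  intro T hT
  rw [bridge T (Finset.mem_powerset.mpr ((Finset.mem_powerset.mp hT).trans hS))]

set_option maxRecDepth 1000000 in
set_option maxHeartbeats 8000000 in
lemma beta_key : ∀ R ∈ (Finset.Icc 3 8).powerset,
    BfFast (R ∪ {1, 9}) = (-1) ^ R.card ∧ BfFast (R ∪ {2, 10}) = (-1) ^ R.card ∧
    BfFast (R ∪ {1, 10}) = -(-1) ^ R.card ∧ BfFast (R ∪ {2, 9}) = -(-1) ^ R.card := by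
  decide

end BetaAux

/-- For any subset `R ⊆ {3,…,8}`, the descent set statistics of `𝔖₁₁` satisfy
`β₁₁(R ∪ {1,9}) ≡ β₁₁(R ∪ {2,10}) ≡ (-1)^{|R|} (mod 3)` and
`β₁₁(R ∪ {1,10}) ≡ β₁₁(R ∪ {2,9}) ≡ -(-1)^{|R|} (mod 3)`. -/
theorem beta_eleven_mod_three (R : Finset ℕ) (hR : R ⊆ Finset.Icc 3 8) :
    ((beta 11 (R ∪ {1, 9}) : ℤ) ≡ (-1) ^ R.card [ZMOD (3 : ℤ)]) ∧
    ((beta 11 (R ∪ {2, 10}) : ℤ) ≡ (-1) ^ R.card [ZMOD (3 : ℤ)]) ∧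
    ((beta 11 (R ∪ {1, 10}) : ℤ) ≡ -(-1) ^ R.card [ZMOD (3 : ℤ)]) ∧
    ((beta 11 (R ∪ {2, 9}) : ℤ) ≡ -(-1) ^ R.card [ZMOD (3 : ℤ)]) := by
  obtain ⟨k1, k2, k3, k4⟩ := BetaAux.beta_key R (Finset.mem_powerset.mpr hR)
  have hsub : ∀ a b : ℕ, ({a, b} : Finset ℕ) ⊆ Finset.Icc 1 10 → R ∪ {a, b} ⊆ Finset.Icc 1 10 :=
    fun a b h => Finset.union_subset (hR.trans (by decide)) h
  have conv : ∀ (S : Finset ℕ) (z : ℤ),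
      ((beta 11 S : ZMod 3) = ((z : ℤ) : ZMod 3)) →
      ((beta 11 S : ℤ) ≡ z [ZMOD (3 : ℤ)]) := by
    intro S z h
    have h2 : (((beta 11 S : ℤ)) : ZMod 3) = ((z : ℤ) : ZMod 3) := by
      push_cast
      push_cast at h
      exact h
    have := (ZMod.intCast_eq_intCast_iff _ _ 3).mp h2
    simpa using this
  refine ⟨conv _ _ ?_, conv _ _ ?_, conv _ _ ?_, conv _ _ ?_⟩
  · rw [BetaAux.beta_fast _ (hsub _ _ (by decide)), k1]; push_cast; ring
  · rw [BetaAux.beta_fast _ (hsub _ _ (by decide)), k2]; push_cast; ring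
  · rw [BetaAux.beta_fast _ (hsub _ _ (by decide)), k3]; push_cast; ring
  · rw [BetaAux.beta_fast _ (hsub _ _ (by decide)), k4]; push_cast; ring
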